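/- Let L be an atomistic ortholattice such that: for every finite element a and every atom p with p ≰ a, a is covered by a ⊔ p (finite covering property); and for any distinct atoms p and q there is an atom r with r ≤ pᶜ and p ⊔ q = p ⊔ r. Then the set F(L) of finite elements of L is a sublattice of L (closed under ⊓ and ⊔), and it satisfies the modular law: for all finite a, b, c with c ≤ b, (c ⊔ a) ⊓ b = c ⊔ (a ⊓ b). -/
import Mathlib


/-- A finite element of a bounded lattice: `⊥` or a join of finitely many atoms. -/
def FinElt {L : Type*} [Lattice L] [BoundedOrder L] (a : L) : Prop :=
  a = ⊥ ∨ ∃ s : Finset L, (∀ p ∈ s, IsAtom p) ∧ a = s.sup id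

section Aux
variable {L : Type*} [Lattice L] [BoundedOrder L]

theorem finElt_iff {x : L} :
    FinElt x ↔ ∃ s : Finset L, (∀ p ∈ s, IsAtom p) ∧ x = s.sup id := by
  constructor
  · rintro (rfl | h)
    · exact ⟨∅, by simp, by simp⟩
    · exact h
  · intro h; exact Or.inr h

theorem fin_bot : FinElt (⊥ : L) := Or.inl rfl

theorem fin_sup {x y : L} (hx : FinElt x) (hy : FinElt y) : FinElt (x ⊔ y) := by
  classical
  rw [finElt_iff] at *
  obtain ⟨s, hs, rfl⟩ := hx
  obtain ⟨t, ht, rfl⟩ := hy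
  refine ⟨s ∪ t, ?_, ?_⟩
  · intro p hp; rcases Finset.mem_union.1 hp with h | h
    · exact hs p h
    · exact ht p h
  · rw [Finset.sup_union]

theorem fin_atom {p : L} (hp : IsAtom p) : FinElt p :=
  finElt_iff.2 ⟨{p}, by simpa using hp, by simp⟩

theorem fin_sup_atom {x p : L} (hx : FinElt x) (hp : IsAtom p) : FinElt (x ⊔ p) :=
  fin_sup hx (fin_atom hp)

-- exchange
theorem exch (h1 : ∀ a p : L, FinElt a → IsAtom p → ¬ p ≤ a → a ⋖ a ⊔ p)
    {x p q : L} (hx : FinElt x) (hp : IsAtom p) (hq : IsAtom q)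
    (hpx : ¬ p ≤ x) (hple : p ≤ x ⊔ q) : x ⊔ p = x ⊔ q := by
  have hqx : ¬ q ≤ x := by
    intro h
    exact hpx (hple.trans (sup_le le_rfl h))
  have hcov := h1 x q hx hq hqx
  have h1' : x < x ⊔ p := lt_of_le_of_ne le_sup_left (by
    intro h; exact hpx (h ▸ le_sup_right))
  have h2' : x ⊔ p ≤ x ⊔ q := sup_le le_sup_left hple
  rcases eq_or_lt_of_le h2' with h | h
  · exact h
  · exact absurd h (hcov.2 h1')

theorem exists_atom_not_le (hatomistic : ∀ a b : L, (∀ p : L, IsAtom p → p ≤ a → p ≤ b) → a ≤ b)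
    {x y : L} (h : ¬ y ≤ x) : ∃ p : L, IsAtom p ∧ p ≤ y ∧ ¬ p ≤ x := by
  by_contra hc
  push_neg at hc
  exact h (hatomistic y x fun p hp hpy => hc p hp hpy)

theorem span_sub (h1 : ∀ a p : L, FinElt a → IsAtom p → ¬ p ≤ a → a ⋖ a ⊔ p)
    (s : Finset L) (hs : ∀ p ∈ s, IsAtom p) :
    ∀ x p : L, FinElt x → IsAtom p → ¬ p ≤ x → p ≤ x ⊔ s.sup id →
    ∃ s' : Finset L, s' ⊆ s ∧ s'.card < s.card ∧ x ⊔ p ⊔ s'.sup id = x ⊔ s.sup id := by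
  classical
  induction s using Finset.induction_on with
  | empty =>
    intro x p hx hp hpx hple
    simp only [Finset.sup_empty, sup_bot_eq] at hple
    exact absurd hple hpx
  | @insert q t hq ih =>
    intro x p hx hp hpx hple
    have hqatom : IsAtom q := hs q (Finset.mem_insert_self q t)
    have ht : ∀ p ∈ t, IsAtom p := fun p hp => hs p (Finset.mem_insert_of_mem hp)
    by_cases hcase : p ≤ x ⊔ t.sup id
    · obtain ⟨s', hsub, hcard, heq⟩ := ih ht x p hx hp hpx hcase
      have hqs' : q ∉ s' := fun h => hq (hsub h)
      refine ⟨insert q s', Finset.insert_subset_insert q hsub, ?_, ?_⟩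
      · rw [Finset.card_insert_of_notMem hqs', Finset.card_insert_of_notMem hq]
        omega
      · rw [Finset.sup_insert, Finset.sup_insert]
        calc x ⊔ p ⊔ (id q ⊔ s'.sup id) = (x ⊔ p ⊔ s'.sup id) ⊔ id q := by
              ac_rfl
          _ = (x ⊔ t.sup id) ⊔ id q := by rw [heq]
          _ = x ⊔ (id q ⊔ t.sup id) := by ac_rfl
    · -- p ≰ x ⊔ sup t, but p ≤ x ⊔ sup t ⊔ q, so exchange
      have hxt : FinElt (x ⊔ t.sup id) := fin_sup hx (finElt_iff.2 ⟨t, ht, rfl⟩)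
      have hple' : p ≤ (x ⊔ t.sup id) ⊔ q := by
        rw [Finset.sup_insert] at hple
        calc p ≤ x ⊔ (id q ⊔ t.sup id) := hple
          _ = (x ⊔ t.sup id) ⊔ q := by show _ = _ ⊔ id q; ac_rfl
      have hex := exch h1 hxt hp hqatom hcase hple'
      refine ⟨t, Finset.subset_insert q t, ?_, ?_⟩
      · rw [Finset.card_insert_of_notMem hq]; omega
      · calc x ⊔ p ⊔ t.sup id = (x ⊔ t.sup id) ⊔ p := by
              rw [sup_assoc, sup_comm p, ← sup_assoc]
          _ = (x ⊔ t.sup id) ⊔ q := hex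
          _ = x ⊔ (insert q t).sup id := by
              rw [Finset.sup_insert]; show _ ⊔ id q = _; ac_rfl



-- master spanning lemma
theorem UP (h1 : ∀ a p : L, FinElt a → IsAtom p → ¬ p ≤ a → a ⋖ a ⊔ p)
    (hatomistic : ∀ a b : L, (∀ p : L, IsAtom p → p ≤ a → p ≤ b) → a ≤ b) :
    ∀ n : ℕ, ∀ s : Finset L, s.card ≤ n → (∀ p ∈ s, IsAtom p) →
    ∀ x y : L, FinElt x → x ≤ y → y ≤ x ⊔ s.sup id →
    ∃ t : Finset L, (∀ p ∈ t, IsAtom p) ∧ t.card ≤ s.card ∧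
      (y ≠ x ⊔ s.sup id → t.card < s.card) ∧ y = x ⊔ t.sup id := by
  classical
  intro n
  induction n with
  | zero =>
    intro s hcard hs x y hx hxy hyle
    have hsempty : s = ∅ := Finset.card_eq_zero.1 (Nat.le_zero.1 hcard)
    subst hsempty
    simp only [Finset.sup_empty, sup_bot_eq] at hyle ⊢
    refine ⟨∅, by simp, le_rfl, ?_, by simp [le_antisymm hyle hxy]⟩
    intro hne; exact absurd (le_antisymm hyle hxy) hne
  | succ n ih =>
    intro s hcard hs x y hx hxy hyle
    by_cases hall : ∀ p : L, IsAtom p → p ≤ y → p ≤ x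
    · have hyx : y = x := le_antisymm (hatomistic y x hall) hxy
      subst hyx
      refine ⟨∅, by simp, Nat.zero_le _, ?_, by simp⟩
      intro hne
      rcases Finset.eq_empty_or_nonempty s with rfl | hne'
      · simp at hne
      · exact Finset.card_pos.2 hne'
    · push_neg at hall
      obtain ⟨p, hp, hpy, hpx⟩ := hall
      obtain ⟨s', hsub, hcard', heq⟩ :=
        span_sub h1 s hs x p hx hp hpx (hpy.trans hyle)
      have hxp : FinElt (x ⊔ p) := fin_sup_atom hx hp
      have hxpy : x ⊔ p ≤ y := sup_le hxy hpy
      have hyle' : y ≤ (x ⊔ p) ⊔ s'.sup id := by rw [heq]; exact hyle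
      obtain ⟨t', ht', htc', hstrict', hty⟩ :=
        ih s' (by omega) (fun q hq => hs q (hsub hq)) (x ⊔ p) y hxp hxpy hyle'
      refine ⟨insert p t', ?_, ?_, ?_, ?_⟩
      · intro q hq
        rcases Finset.mem_insert.1 hq with rfl | hq
        · exact hp
        · exact ht' q hq
      · calc (insert p t').card ≤ t'.card + 1 := Finset.card_insert_le p t'
          _ ≤ s'.card + 1 := by omega
          _ ≤ s.card := by omega
      · intro hne
        have : y ≠ (x ⊔ p) ⊔ s'.sup id := by rw [heq]; exact hne
        have := hstrict' this
        calc (insert p t').card ≤ t'.card + 1 := Finset.card_insert_le p t'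
          _ ≤ s'.card := by omega
          _ < s.card := hcard'
      · rw [Finset.sup_insert, hty]; show _ = x ⊔ (id p ⊔ _); ac_rfl

theorem below_fin (h1 : ∀ a p : L, FinElt a → IsAtom p → ¬ p ≤ a → a ⋖ a ⊔ p)
    (hatomistic : ∀ a b : L, (∀ p : L, IsAtom p → p ≤ a → p ≤ b) → a ≤ b)
    {a x : L} (ha : FinElt a) (hxa : x ≤ a) : FinElt x := by
  obtain ⟨s, hs, rfl⟩ := finElt_iff.1 ha
  obtain ⟨t, ht, _, _, hxt⟩ := UP h1 hatomistic s.card s le_rfl hs ⊥ x fin_bot bot_le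
    (by simpa using hxa)
  rw [bot_sup_eq] at hxt
  exact finElt_iff.2 ⟨t, ht, hxt⟩

noncomputable def dRank {L : Type*} [Lattice L] [BoundedOrder L] (x : L) : ℕ :=
  sInf {n | ∃ s : Finset L, (∀ p ∈ s, IsAtom p) ∧ s.card = n ∧ x = s.sup id}

theorem d_le {x : L} {s : Finset L} (hs : ∀ p ∈ s, IsAtom p) (hx : x = s.sup id) :
    dRank x ≤ s.card :=
  Nat.sInf_le ⟨s, hs, rfl, hx⟩

theorem d_spec {x : L} (hx : FinElt x) :
    ∃ s : Finset L, (∀ p ∈ s, IsAtom p) ∧ s.card = dRank x ∧ x = s.sup id := by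
  obtain ⟨s, hs, rfl⟩ := finElt_iff.1 hx
  exact Nat.sInf_mem (⟨s.card, s, hs, rfl, rfl⟩ :
    Set.Nonempty {n | ∃ s' : Finset L, (∀ p ∈ s', IsAtom p) ∧ s'.card = n ∧ s.sup id = s'.sup id})

theorem d_bot : dRank (⊥ : L) = 0 :=
  Nat.le_zero.1 (by simpa using d_le (x := (⊥ : L)) (s := ∅) (by simp) (by simp))

theorem d_mono (h1 : ∀ a p : L, FinElt a → IsAtom p → ¬ p ≤ a → a ⋖ a ⊔ p)
    (hatomistic : ∀ a b : L, (∀ p : L, IsAtom p → p ≤ a → p ≤ b) → a ≤ b)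
    {x y : L} (hy : FinElt y) (hxy : x ≤ y) : dRank x ≤ dRank y := by
  obtain ⟨s, hs, hc, rfl⟩ := d_spec hy
  obtain ⟨t, ht, htc, _, hxt⟩ := UP h1 hatomistic s.card s le_rfl hs ⊥ x fin_bot bot_le
    (by simpa using hxy)
  rw [bot_sup_eq] at hxt
  calc dRank x ≤ t.card := d_le ht hxt
    _ ≤ s.card := htc
    _ = _ := hc

theorem d_strict (h1 : ∀ a p : L, FinElt a → IsAtom p → ¬ p ≤ a → a ⋖ a ⊔ p)
    (hatomistic : ∀ a b : L, (∀ p : L, IsAtom p → p ≤ a → p ≤ b) → a ≤ b)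
    {x y : L} (hy : FinElt y) (hxy : x < y) : dRank x < dRank y := by
  obtain ⟨s, hs, hc, rfl⟩ := d_spec hy
  obtain ⟨t, ht, _, hstrict, hxt⟩ := UP h1 hatomistic s.card s le_rfl hs ⊥ x fin_bot bot_le
    (by simpa using hxy.le)
  rw [bot_sup_eq] at hxt
  have hne : x ≠ ⊥ ⊔ s.sup id := by rw [bot_sup_eq]; exact hxy.ne
  calc dRank x ≤ t.card := d_le ht hxt
    _ < s.card := hstrict hne
    _ = _ := hc

theorem d_sup_atom (h1 : ∀ a p : L, FinElt a → IsAtom p → ¬ p ≤ a → a ⋖ a ⊔ p)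
    (hatomistic : ∀ a b : L, (∀ p : L, IsAtom p → p ≤ a → p ≤ b) → a ≤ b)
    {x p : L} (hx : FinElt x) (hp : IsAtom p) (hpx : ¬ p ≤ x) :
    dRank (x ⊔ p) = dRank x + 1 := by
  classical
  obtain ⟨s, hs, hc, hxs⟩ := d_spec hx
  have hle : dRank (x ⊔ p) ≤ dRank x + 1 := by
    have : x ⊔ p = (insert p s).sup id := by rw [Finset.sup_insert, hxs]; ac_rfl
    have hins : ∀ q ∈ insert p s, IsAtom q := by
      intro q hq
      rcases Finset.mem_insert.1 hq with rfl | hq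
      · exact hp
      · exact hs q hq
    calc dRank (x ⊔ p) ≤ (insert p s).card := d_le hins this
      _ ≤ s.card + 1 := Finset.card_insert_le p s
      _ = dRank x + 1 := by omega
  have hlt : dRank x < dRank (x ⊔ p) :=
    d_strict h1 hatomistic (fin_sup_atom hx hp)
      (lt_of_le_of_ne le_sup_left (fun h => hpx (h ▸ le_sup_right)))
  omega

theorem d_eq_of_le (h1 : ∀ a p : L, FinElt a → IsAtom p → ¬ p ≤ a → a ⋖ a ⊔ p)
    (hatomistic : ∀ a b : L, (∀ p : L, IsAtom p → p ≤ a → p ≤ b) → a ≤ b)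
    {x y : L} (hy : FinElt y) (hxy : x ≤ y) (hd : dRank y ≤ dRank x) : x = y := by
  rcases eq_or_lt_of_le hxy with h | h
  · exact h
  · exact absurd (d_strict h1 hatomistic hy h) (by omega)



theorem Egrow (h1 : ∀ a p : L, FinElt a → IsAtom p → ¬ p ≤ a → a ⋖ a ⊔ p)
    (hatomistic : ∀ a b : L, (∀ p : L, IsAtom p → p ≤ a → p ≤ b) → a ≤ b) :
    ∀ n : ℕ, ∀ x y : L, FinElt y → x ≤ y → dRank y ≤ dRank x + n →
    ∃ u : Finset L, (∀ p ∈ u, IsAtom p) ∧ u.card + dRank x ≤ dRank y ∧ y = x ⊔ u.sup id := by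
  classical
  intro n
  induction n with
  | zero =>
    intro x y hy hxy hd
    have hx : FinElt x := below_fin h1 hatomistic hy hxy
    have hxeq : x = y := d_eq_of_le h1 hatomistic hy hxy (by omega)
    subst hxeq
    exact ⟨∅, by simp, by simp, by simp⟩
  | succ n ih =>
    intro x y hy hxy hd
    have hx : FinElt x := below_fin h1 hatomistic hy hxy
    by_cases hyx : y ≤ x
    · have hxeq : x = y := le_antisymm hxy hyx
      subst hxeq
      exact ⟨∅, by simp, by simp, by simp⟩
    · obtain ⟨p, hp, hpy, hpx⟩ := exists_atom_not_le hatomistic hyx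
      have hdxp : dRank (x ⊔ p) = dRank x + 1 := d_sup_atom h1 hatomistic hx hp hpx
      have hxpy : x ⊔ p ≤ y := sup_le hxy hpy
      obtain ⟨u', hu', hcu', hyu'⟩ := ih (x ⊔ p) y hy hxpy (by omega)
      refine ⟨insert p u', ?_, ?_, ?_⟩
      · intro q hq
        rcases Finset.mem_insert.1 hq with rfl | hq
        · exact hp
        · exact hu' q hq
      · calc (insert p u').card + dRank x ≤ u'.card + 1 + dRank x :=
              by have := Finset.card_insert_le p u'; omega
          _ = u'.card + dRank (x ⊔ p) := by omega
          _ ≤ dRank y := hcu'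
      · rw [Finset.sup_insert, hyu']; show _ = x ⊔ (id p ⊔ _); ac_rfl

theorem submod (h1 : ∀ a p : L, FinElt a → IsAtom p → ¬ p ≤ a → a ⋖ a ⊔ p)
    (hatomistic : ∀ a b : L, (∀ p : L, IsAtom p → p ≤ a → p ≤ b) → a ≤ b)
    {x y : L} (hx : FinElt x) (hy : FinElt y) :
    dRank (x ⊔ y) + dRank (x ⊓ y) ≤ dRank x + dRank y := by
  classical
  obtain ⟨u, hu, hcu, hxu⟩ := Egrow h1 hatomistic (dRank x) (x ⊓ y) x hx inf_le_left
    (by omega)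
  obtain ⟨t, ht, htc, hyt⟩ := d_spec hy
  have hsup : x ⊔ y = (t ∪ u).sup id := by
    rw [Finset.sup_union, ← hyt]
    calc x ⊔ y = ((x ⊓ y) ⊔ u.sup id) ⊔ y := by rw [← hxu]
      _ = y ⊔ u.sup id := by
          rw [show ((x ⊓ y) ⊔ u.sup id) ⊔ y = (y ⊔ (x ⊓ y)) ⊔ u.sup id by ac_rfl,
            show y ⊔ (x ⊓ y) = y from sup_eq_left.2 inf_le_right]
  have : dRank (x ⊔ y) ≤ t.card + u.card := by
    calc dRank (x ⊔ y) ≤ (t ∪ u).card := d_le (by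
          intro q hq
          rcases Finset.mem_union.1 hq with h | h
          · exact ht q h
          · exact hu q h) hsup
      _ ≤ t.card + u.card := Finset.card_union_le t u
  omega


theorem le_oc_swap {oc : L → L} (hanti : ∀ a b : L, a ≤ b → oc b ≤ oc a)
    (hinv : ∀ a : L, oc (oc a) = a) {x y : L} (h : x ≤ oc y) : y ≤ oc x := by
  have := hanti _ _ h
  rw [hinv] at this
  exact this

theorem oc_sup {oc : L → L} (hanti : ∀ a b : L, a ≤ b → oc b ≤ oc a)
    (hinv : ∀ a : L, oc (oc a) = a) (x y : L) : oc (x ⊔ y) = oc x ⊓ oc y := by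
  apply le_antisymm
  · exact le_inf (hanti _ _ le_sup_left) (hanti _ _ le_sup_right)
  · apply le_oc_swap hanti hinv
    exact sup_le (le_oc_swap hanti hinv inf_le_left) (le_oc_swap hanti hinv inf_le_right)

theorem oc_inf {oc : L → L} (hanti : ∀ a b : L, a ≤ b → oc b ≤ oc a)
    (hinv : ∀ a : L, oc (oc a) = a) (x y : L) : oc (x ⊓ y) = oc x ⊔ oc y := by
  have := oc_sup hanti hinv (oc x) (oc y)
  rw [hinv, hinv] at this
  rw [← this, hinv]

theorem oc_bot {oc : L → L} (htop : ∀ a : L, a ⊔ oc a = ⊤) : oc (⊥ : L) = ⊤ := by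
  have := htop (⊥ : L)
  rwa [bot_sup_eq] at this

theorem atom_not_le_oc {oc : L → L} (hbot : ∀ a : L, a ⊓ oc a = ⊥)
    {p : L} (hp : IsAtom p) : ¬ p ≤ oc p := by
  intro h
  exact hp.1 (le_bot_iff.1 ((le_inf le_rfl h).trans (hbot p).le))

-- atomic orthomodularity from h2
theorem OM1 {oc : L → L}
    (hatomistic : ∀ a b : L, (∀ p : L, IsAtom p → p ≤ a → p ≤ b) → a ≤ b)
    (h2 : ∀ p q : L, IsAtom p → IsAtom q → p ≠ q →
      ∃ r : L, IsAtom r ∧ r ≤ oc p ∧ p ⊔ q = p ⊔ r)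
    {p x : L} (hp : IsAtom p) (hpx : p ≤ x) : x = p ⊔ (x ⊓ oc p) := by
  apply le_antisymm
  · apply hatomistic
    intro q hq hqx
    by_cases hqp : q = p
    · subst hqp; exact le_sup_left
    · obtain ⟨r, hr, hrop, hpq⟩ := h2 p q hp hq (Ne.symm hqp)
      have hrx : r ≤ x := le_sup_right.trans (hpq ▸ sup_le hpx hqx)
      calc q ≤ p ⊔ q := le_sup_right
        _ = p ⊔ r := hpq
        _ ≤ p ⊔ (x ⊓ oc p) := sup_le_sup_left (le_inf hrx hrop) p
  · exact sup_le hpx inf_le_left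



variable {oc : L → L}

-- orthogonal basis
theorem orthbasis (h1 : ∀ a p : L, FinElt a → IsAtom p → ¬ p ≤ a → a ⋖ a ⊔ p)
    (hatomistic : ∀ a b : L, (∀ p : L, IsAtom p → p ≤ a → p ≤ b) → a ≤ b)
    (hanti : ∀ a b : L, a ≤ b → oc b ≤ oc a) (hinv : ∀ a : L, oc (oc a) = a)
    (hbot : ∀ a : L, a ⊓ oc a = ⊥)
    (h2 : ∀ p q : L, IsAtom p → IsAtom q → p ≠ q →
      ∃ r : L, IsAtom r ∧ r ≤ oc p ∧ p ⊔ q = p ⊔ r) :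
    ∀ n : ℕ, ∀ x : L, FinElt x → dRank x ≤ n →
    ∃ s : Finset L, (∀ p ∈ s, IsAtom p) ∧ x = s.sup id ∧
      (∀ p ∈ s, ∀ q ∈ s, p ≠ q → p ≤ oc q) := by
  classical
  intro n
  induction n with
  | zero =>
    intro x hx hd
    have : dRank x = 0 := by omega
    obtain ⟨s, hs, hsc, rfl⟩ := d_spec hx
    rw [this] at hsc
    refine ⟨s, hs, rfl, ?_⟩
    rw [Finset.card_eq_zero.1 hsc]
    simp
  | succ n ih =>
    intro x hx hd
    by_cases hxbot : x ≤ ⊥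
    · refine ⟨∅, by simp, by simpa using le_bot_iff.1 hxbot, by simp⟩
    · obtain ⟨p, hp, hpx, -⟩ := exists_atom_not_le hatomistic hxbot
      set x' := x ⊓ oc p with hx'def
      have hx' : FinElt x' := below_fin h1 hatomistic hx inf_le_left
      have hxeq : x = p ⊔ x' := OM1 hatomistic h2 hp hpx
      have hpxne : ¬ p ≤ x' := fun h => atom_not_le_oc hbot hp (h.trans inf_le_right)
      have hlt : x' < x := lt_of_le_of_ne inf_le_left
        (fun h => hpxne (h ▸ hpx))
      have hdx' : dRank x' < dRank x := d_strict h1 hatomistic hx hlt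
      obtain ⟨s', hs', hxs', horth'⟩ := ih x' hx' (by omega)
      have hs'op : ∀ q ∈ s', q ≤ oc p := by
        intro q hq
        calc q ≤ s'.sup id := Finset.le_sup (f := id) hq
          _ = x' := hxs'.symm
          _ ≤ oc p := inf_le_right
      have hpns' : p ∉ s' := fun h => atom_not_le_oc hbot hp (hs'op p h)
      refine ⟨insert p s', ?_, ?_, ?_⟩
      · intro q hq
        rcases Finset.mem_insert.1 hq with rfl | hq
        · exact hp
        · exact hs' q hq
      · rw [Finset.sup_insert, ← hxs']; exact hxeq
      · intro a ha b hb hab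
        rcases Finset.mem_insert.1 ha with h1a | h1a
        · rcases Finset.mem_insert.1 hb with h1b | h1b
          · exact absurd (h1a.trans h1b.symm) hab
          · rw [h1a]; exact le_oc_swap hanti hinv (hs'op b h1b)
        · rcases Finset.mem_insert.1 hb with h1b | h1b
          · rw [h1b]; exact hs'op a h1a
          · exact horth' a h1a b h1b hab

-- orthomodularity for finite elements
theorem OMfin (hatomistic : ∀ a b : L, (∀ p : L, IsAtom p → p ≤ a → p ≤ b) → a ≤ b)
    (hanti : ∀ a b : L, a ≤ b → oc b ≤ oc a) (hinv : ∀ a : L, oc (oc a) = a)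
    (htop : ∀ a : L, a ⊔ oc a = ⊤)
    (h2 : ∀ p q : L, IsAtom p → IsAtom q → p ≠ q →
      ∃ r : L, IsAtom r ∧ r ≤ oc p ∧ p ⊔ q = p ⊔ r) :
    ∀ s : Finset L, (∀ p ∈ s, IsAtom p) → (∀ p ∈ s, ∀ q ∈ s, p ≠ q → p ≤ oc q) →
    ∀ x : L, s.sup id ≤ x → x = s.sup id ⊔ (x ⊓ oc (s.sup id)) := by
  classical
  intro s
  induction s using Finset.induction_on with
  | empty =>
    intro _ _ x _
    simp [oc_bot htop]
  | @insert p s' hpns' ih =>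
    intro hs horth x hle
    have hp : IsAtom p := hs p (Finset.mem_insert_self p s')
    have hs' : ∀ q ∈ s', IsAtom q := fun q hq => hs q (Finset.mem_insert_of_mem hq)
    have horth' : ∀ a ∈ s', ∀ b ∈ s', a ≠ b → a ≤ oc b :=
      fun a ha b hb hab => horth a (Finset.mem_insert_of_mem ha) b
        (Finset.mem_insert_of_mem hb) hab
    rw [Finset.sup_insert] at hle ⊢
    simp only [id_eq] at hle ⊢
    set a' := s'.sup id with ha'def
    have hpx : p ≤ x := le_sup_left.trans hle
    have ha'x : a' ≤ x := le_sup_right.trans hle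
    have hihx := ih hs' horth' x ha'x
    have hs'op : a' ≤ oc p := by
      apply Finset.sup_le
      intro q hq
      have : q ≠ p := fun h => hpns' (h ▸ hq)
      exact horth q (Finset.mem_insert_of_mem hq) p (Finset.mem_insert_self p s') this
    have hpoca' : p ≤ oc a' := le_oc_swap hanti hinv hs'op
    set y := x ⊓ oc a' with hydef
    have hpy : p ≤ y := le_inf hpx hpoca'
    have hOM1 := OM1 hatomistic h2 hp hpy
    have hykey : y ⊓ oc p = x ⊓ oc (p ⊔ a') := by
      rw [hydef, oc_sup hanti hinv, inf_assoc, inf_comm (oc a') (oc p)]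
    apply le_antisymm
    · calc x = a' ⊔ y := hihx
        _ = a' ⊔ (p ⊔ (y ⊓ oc p)) := by rw [← hOM1]
        _ = (p ⊔ a') ⊔ (y ⊓ oc p) := by ac_rfl
        _ = (p ⊔ a') ⊔ (x ⊓ oc (p ⊔ a')) := by rw [hykey]
        _ ≤ (p ⊔ a') ⊔ (x ⊓ oc (p ⊔ a')) := le_rfl
    · exact sup_le hle inf_le_left

theorem OM (h1 : ∀ a p : L, FinElt a → IsAtom p → ¬ p ≤ a → a ⋖ a ⊔ p)
    (hatomistic : ∀ a b : L, (∀ p : L, IsAtom p → p ≤ a → p ≤ b) → a ≤ b)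
    (hanti : ∀ a b : L, a ≤ b → oc b ≤ oc a) (hinv : ∀ a : L, oc (oc a) = a)
    (hbot : ∀ a : L, a ⊓ oc a = ⊥) (htop : ∀ a : L, a ⊔ oc a = ⊤)
    (h2 : ∀ p q : L, IsAtom p → IsAtom q → p ≠ q →
      ∃ r : L, IsAtom r ∧ r ≤ oc p ∧ p ⊔ q = p ⊔ r)
    {a x : L} (ha : FinElt a) (hax : a ≤ x) : x = a ⊔ (x ⊓ oc a) := by
  obtain ⟨s, hs, hseq, horth⟩ :=
    orthbasis h1 hatomistic hanti hinv hbot h2 (dRank a) a ha le_rfl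
  rw [hseq] at hax ⊢
  exact OMfin hatomistic hanti hinv htop h2 s hs horth x hax



theorem relinv (h1 : ∀ a p : L, FinElt a → IsAtom p → ¬ p ≤ a → a ⋖ a ⊔ p)
    (hatomistic : ∀ a b : L, (∀ p : L, IsAtom p → p ≤ a → p ≤ b) → a ≤ b)
    (hanti : ∀ a b : L, a ≤ b → oc b ≤ oc a) (hinv : ∀ a : L, oc (oc a) = a)
    (hbot : ∀ a : L, a ⊓ oc a = ⊥) (htop : ∀ a : L, a ⊔ oc a = ⊤)
    (h2 : ∀ p q : L, IsAtom p → IsAtom q → p ≠ q →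
      ∃ r : L, IsAtom r ∧ r ≤ oc p ∧ p ⊔ q = p ⊔ r)
    {a b : L} (hb : FinElt b) (hab : a ≤ b) : b ⊓ (oc b ⊔ a) = a := by
  set m := b ⊓ (oc b ⊔ a) with hmdef
  have ham : a ≤ m := le_inf hab le_sup_right
  have hmb : m ≤ b := inf_le_left
  have ha : FinElt a := below_fin h1 hatomistic hb hab
  have hOM : m = a ⊔ (m ⊓ oc a) := OM h1 hatomistic hanti hinv hbot htop h2 ha ham
  have key : oc (b ⊓ oc a) = oc b ⊔ a := by rw [oc_inf hanti hinv, hinv]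
  have hz : m ⊓ oc a ≤ (b ⊓ oc a) ⊓ oc (b ⊓ oc a) := by
    rw [key]
    exact le_inf (le_inf (hmb.trans' inf_le_left) inf_le_right)
      ((inf_le_right (a := b)).trans' inf_le_left)
  have hz' : m ⊓ oc a = ⊥ := le_bot_iff.1 (hz.trans (hbot _).le)
  rw [hOM, hz', sup_bot_eq]

theorem compl_d (h1 : ∀ a p : L, FinElt a → IsAtom p → ¬ p ≤ a → a ⋖ a ⊔ p)
    (hatomistic : ∀ a b : L, (∀ p : L, IsAtom p → p ≤ a → p ≤ b) → a ≤ b)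
    (hanti : ∀ a b : L, a ≤ b → oc b ≤ oc a) (hinv : ∀ a : L, oc (oc a) = a)
    (hbot : ∀ a : L, a ⊓ oc a = ⊥) (htop : ∀ a : L, a ⊔ oc a = ⊤)
    (h2 : ∀ p q : L, IsAtom p → IsAtom q → p ≠ q →
      ∃ r : L, IsAtom r ∧ r ≤ oc p ∧ p ⊔ q = p ⊔ r) :
    ∀ n : ℕ, ∀ B z : L, FinElt B → dRank B ≤ n → z ≤ B →
    dRank z + dRank (B ⊓ oc z) = dRank B := by
  intro n
  induction n with
  | zero =>
    intro B z hB hd hzB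
    have hBbot : B = ⊥ := by
      obtain ⟨s, hs, hsc, rfl⟩ := d_spec hB
      have : s = ∅ := Finset.card_eq_zero.1 (by omega)
      rw [this]; simp
    subst hBbot
    have hz : z = ⊥ := le_bot_iff.1 hzB
    subst hz
    simp [d_bot]
  | succ n ih =>
    intro B z hB hd hzB
    set z' := B ⊓ oc z with hz'def
    have hz' : FinElt z' := below_fin h1 hatomistic hB inf_le_left
    have hBeq : B = z ⊔ z' := OM h1 hatomistic hanti hinv hbot htop h2
      (below_fin h1 hatomistic hB hzB) hzB
    by_cases hbotcase : z' ≤ ⊥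
    · have hzb : z' = ⊥ := le_bot_iff.1 hbotcase
      rw [hzb, d_bot]
      rw [hzb, sup_bot_eq] at hBeq
      rw [← hBeq]
      omega
    · obtain ⟨p, hp, hpz', -⟩ := exists_atom_not_le hatomistic hbotcase
      have hpB : p ≤ B := hpz'.trans inf_le_left
      set B₁ := B ⊓ oc p with hB1def
      have hB1fin : FinElt B₁ := below_fin h1 hatomistic hB inf_le_left
      have hpnB1 : ¬ p ≤ B₁ := fun h => atom_not_le_oc hbot hp (h.trans inf_le_right)
      have hBiseq : B = B₁ ⊔ p :=
        (OM1 hatomistic h2 (oc := oc) hp hpB).trans (sup_comm _ _)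
      have hdB : dRank B = dRank B₁ + 1 := by
        conv_lhs => rw [hBiseq]
        exact d_sup_atom h1 hatomistic hB1fin hp hpnB1
      have hzB1 : z ≤ B₁ := by
        have hpocz : p ≤ oc z := hpz'.trans inf_le_right
        exact le_inf hzB (le_oc_swap hanti hinv hpocz)
      have hB1z : B₁ ⊓ oc z = z' ⊓ oc p := by
        rw [hB1def, hz'def, inf_right_comm]
      have hih := ih B₁ z hB1fin (by omega) hzB1
      -- dRank z' = dRank (z' ⊓ oc p) + 1
      have hz'eq : z' = (z' ⊓ oc p) ⊔ p :=
        (OM1 hatomistic h2 (oc := oc) hp hpz').trans (sup_comm _ _)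
      have hpnz'p : ¬ p ≤ z' ⊓ oc p := fun h => atom_not_le_oc hbot hp (h.trans inf_le_right)
      have hdz' : dRank z' = dRank (z' ⊓ oc p) + 1 := by
        conv_lhs => rw [hz'eq]
        exact d_sup_atom h1 hatomistic (below_fin h1 hatomistic hz' inf_le_left) hp hpnz'p
      rw [hB1z] at hih
      omega

theorem myCompl_inf (h1 : ∀ a p : L, FinElt a → IsAtom p → ¬ p ≤ a → a ⋖ a ⊔ p)
    (hatomistic : ∀ a b : L, (∀ p : L, IsAtom p → p ≤ a → p ≤ b) → a ≤ b)
    (hanti : ∀ a b : L, a ≤ b → oc b ≤ oc a) (hinv : ∀ a : L, oc (oc a) = a)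
    (hbot : ∀ a : L, a ⊓ oc a = ⊥) (htop : ∀ a : L, a ⊔ oc a = ⊤)
    (h2 : ∀ p q : L, IsAtom p → IsAtom q → p ≠ q →
      ∃ r : L, IsAtom r ∧ r ≤ oc p ∧ p ⊔ q = p ⊔ r)
    {B x y : L} (hB : FinElt B) (hxB : x ≤ B) (hyB : y ≤ B) :
    B ⊓ oc (x ⊓ y) = (B ⊓ oc x) ⊔ (B ⊓ oc y) := by
  set R := (B ⊓ oc x) ⊔ (B ⊓ oc y) with hRdef
  have hRB : R ≤ B := sup_le inf_le_left inf_le_left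
  have hcR : B ⊓ oc R = x ⊓ y := by
    have hocR : oc R = (oc B ⊔ x) ⊓ (oc B ⊔ y) := by
      rw [hRdef, oc_sup hanti hinv, oc_inf hanti hinv, oc_inf hanti hinv, hinv, hinv]
    rw [hocR, ← inf_assoc, relinv h1 hatomistic hanti hinv hbot htop h2 hB hxB]
    apply le_antisymm
    · refine le_inf inf_le_left ?_
      calc x ⊓ (oc B ⊔ y) ≤ B ⊓ (oc B ⊔ y) := inf_le_inf_right _ hxB
        _ = y := relinv h1 hatomistic hanti hinv hbot htop h2 hB hyB
    · exact le_inf inf_le_left (inf_le_right.trans le_sup_right)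
  calc B ⊓ oc (x ⊓ y) = B ⊓ oc (B ⊓ oc R) := by rw [hcR]
    _ = B ⊓ (oc B ⊔ R) := by rw [oc_inf hanti hinv, hinv]
    _ = R := relinv h1 hatomistic hanti hinv hbot htop h2 hB hRB

theorem supmod (h1 : ∀ a p : L, FinElt a → IsAtom p → ¬ p ≤ a → a ⋖ a ⊔ p)
    (hatomistic : ∀ a b : L, (∀ p : L, IsAtom p → p ≤ a → p ≤ b) → a ≤ b)
    (hanti : ∀ a b : L, a ≤ b → oc b ≤ oc a) (hinv : ∀ a : L, oc (oc a) = a)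
    (hbot : ∀ a : L, a ⊓ oc a = ⊥) (htop : ∀ a : L, a ⊔ oc a = ⊤)
    (h2 : ∀ p q : L, IsAtom p → IsAtom q → p ≠ q →
      ∃ r : L, IsAtom r ∧ r ≤ oc p ∧ p ⊔ q = p ⊔ r)
    {B x y : L} (hB : FinElt B) (hxB : x ≤ B) (hyB : y ≤ B) :
    dRank x + dRank y ≤ dRank (x ⊓ y) + dRank (x ⊔ y) := by
  have hfx : FinElt (B ⊓ oc x) := below_fin h1 hatomistic hB inf_le_left
  have hfy : FinElt (B ⊓ oc y) := below_fin h1 hatomistic hB inf_le_left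
  have hsub := submod h1 hatomistic hfx hfy
  have hsupeq : (B ⊓ oc x) ⊔ (B ⊓ oc y) = B ⊓ oc (x ⊓ y) :=
    (myCompl_inf h1 hatomistic hanti hinv hbot htop h2 hB hxB hyB).symm
  have hinfeq : (B ⊓ oc x) ⊓ (B ⊓ oc y) = B ⊓ oc (x ⊔ y) := by
    rw [inf_inf_inf_comm, inf_idem, oc_sup hanti hinv]
  rw [hsupeq, hinfeq] at hsub
  have e1 := compl_d h1 hatomistic hanti hinv hbot htop h2 (dRank B) B x hB le_rfl hxB
  have e2 := compl_d h1 hatomistic hanti hinv hbot htop h2 (dRank B) B y hB le_rfl hyB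
  have e3 := compl_d h1 hatomistic hanti hinv hbot htop h2 (dRank B) B (x ⊓ y) hB le_rfl
    (inf_le_left.trans hxB)
  have e4 := compl_d h1 hatomistic hanti hinv hbot htop h2 (dRank B) B (x ⊔ y) hB le_rfl
    (sup_le hxB hyB)
  omega

end Aux


theorem stmt_8 {L : Type*} [Lattice L] [BoundedOrder L] (oc : L → L)
    (hanti : ∀ a b : L, a ≤ b → oc b ≤ oc a)
    (hinv : ∀ a : L, oc (oc a) = a)
    (hbot : ∀ a : L, a ⊓ oc a = ⊥)
    (htop : ∀ a : L, a ⊔ oc a = ⊤)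
    (hatomistic : ∀ a b : L, (∀ p : L, IsAtom p → p ≤ a → p ≤ b) → a ≤ b)
    (h1 : ∀ a p : L, FinElt a → IsAtom p → ¬ p ≤ a → a ⋖ a ⊔ p)
    (h2 : ∀ p q : L, IsAtom p → IsAtom q → p ≠ q →
      ∃ r : L, IsAtom r ∧ r ≤ oc p ∧ p ⊔ q = p ⊔ r) :
    (∀ a b : L, FinElt a → FinElt b → FinElt (a ⊓ b) ∧ FinElt (a ⊔ b)) ∧
    (∀ a b c : L, FinElt a → FinElt b → FinElt c → c ≤ b →
      (c ⊔ a) ⊓ b = c ⊔ (a ⊓ b)) := by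
  constructor
  · intro a b ha hb
    exact ⟨below_fin h1 hatomistic ha inf_le_left, fin_sup ha hb⟩
  · intro a b c ha hb hc hcb
    set B := a ⊔ b with hBdef
    have hB : FinElt B := fin_sup ha hb
    have haB : a ≤ B := le_sup_left
    have hbB : b ≤ B := le_sup_right
    have hcB : c ≤ B := hcb.trans hbB
    set M := (c ⊔ a) ⊓ b with hMdef
    set N := c ⊔ (a ⊓ b) with hNdef
    have hNM : N ≤ M := sup_le (le_inf le_sup_left hcb)
      (le_inf (inf_le_left.trans le_sup_right) inf_le_right)
    have hMfin : FinElt M := below_fin h1 hatomistic hb inf_le_right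
    have hNfin : FinElt N := fin_sup hc (below_fin h1 hatomistic ha inf_le_left)
    -- rank computations
    have hca : FinElt (c ⊔ a) := fin_sup hc ha
    have i1 : dRank ((c ⊔ a) ⊔ b) + dRank M ≤ dRank (c ⊔ a) + dRank b :=
      submod h1 hatomistic hca hb
    have hcab : (c ⊔ a) ⊔ b = a ⊔ b := by
      rw [sup_assoc]; exact sup_eq_right.2 (hcb.trans le_sup_right)
    have i2 : dRank (c ⊔ a) + dRank (c ⊓ a) ≤ dRank c + dRank a :=
      submod h1 hatomistic hc ha
    have i3 : dRank c + dRank (a ⊓ b) ≤ dRank (c ⊓ (a ⊓ b)) + dRank N :=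
      supmod h1 hatomistic hanti hinv hbot htop h2 hB hcB (inf_le_left.trans haB)
    have hcainf : c ⊓ (a ⊓ b) = c ⊓ a := by
      rw [inf_comm a b, ← inf_assoc, inf_eq_left.2 hcb]
    have i4 : dRank a + dRank b ≤ dRank (a ⊓ b) + dRank (a ⊔ b) :=
      supmod h1 hatomistic hanti hinv hbot htop h2 hB haB hbB
    rw [hcab] at i1
    rw [hcainf] at i3
    have hdMN : dRank M ≤ dRank N := by omega
    exact (d_eq_of_le h1 hatomistic hMfin hNM hdMN).symm
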